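/- Let s, s' ∈ S_N with s ≤_B s' and inv(s) = inv(s') − 2. Then there exist exactly two elements u of S_N with inv(u) = inv(s)+1 and s <_B u <_B s'. (The interval [s,s'] of length 2 in Bruhat order is a diamond.) -/

import Mathlib

/-- Number of inversions of a permutation of `Fin N`. -/
def inversions {N : ℕ} (s : Equiv.Perm (Fin N)) : ℕ :=
  (Finset.univ.filter (fun p : Fin N × Fin N => p.1 < p.2 ∧ s p.2 < s p.1)).card

/-- One step of the Bruhat relation: multiply by a transposition, not decreasing inversions. -/
def bruhatStep {N : ℕ} (σ τ : Equiv.Perm (Fin N)) : Prop :=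
  ∃ i j : Fin N, i ≠ j ∧ τ = σ * Equiv.swap i j ∧ inversions σ ≤ inversions τ

/-- The Bruhat order on the symmetric group: reflexive-transitive closure of `bruhatStep`. -/
def bruhatLE {N : ℕ} : Equiv.Perm (Fin N) → Equiv.Perm (Fin N) → Prop :=
  Relation.ReflTransGen bruhatStep

/-- Strict Bruhat order. -/
def bruhatLT {N : ℕ} (σ τ : Equiv.Perm (Fin N)) : Prop := bruhatLE σ τ ∧ σ ≠ τ

/-- Number of excedances of a permutation. -/
def exced {N : ℕ} (s : Equiv.Perm (Fin N)) : ℕ :=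
  (Finset.univ.filter (fun i : Fin N => i < s i)).card

/-- The involution length `l_I`. -/
def lI {N : ℕ} (s : Equiv.Perm (Fin N)) : ℕ := (inversions s + exced s) / 2


open Finset Equiv

section Aux
variable {N : ℕ}



lemma inv_mul_swap (u : Equiv.Perm (Fin N)) {i j : Fin N} (hij : i < j) (huv : u i < u j) :
    inversions (u * Equiv.swap i j) =
      inversions u + 2 * ((univ.filter (fun k => i < k ∧ k < j ∧ u i < u k ∧ u k < u j)).card) + 1 := by
  classical
  set t := Equiv.swap i j with ht
  have hti : t i = j := Equiv.swap_apply_left i j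
  have htj : t j = i := Equiv.swap_apply_right i j
  have htk : ∀ k, k ≠ i → k ≠ j → t k = k := fun k h1 h2 => Equiv.swap_apply_of_ne_of_ne h1 h2
  have htt : ∀ k, t (t k) = k := fun k => Equiv.swap_apply_self i j k
  -- Step 1+2: inversions (u*t) = card S2
  have step2 : inversions (u * t) =
      (univ.filter (fun p : Fin N × Fin N => p.1 < p.2 ∧
        Xor' (u p.2 < u p.1) (t p.2 < t p.1))).card := by
    have : inversions (u * t) =
        (univ.filter (fun p : Fin N × Fin N => p.1 < p.2 ∧ u (t p.2) < u (t p.1))).card := by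
      simp [inversions, Equiv.Perm.mul_apply]
      congr 1
    rw [this]
    apply Finset.card_bij' (fun p _ => if t p.1 < t p.2 then (t p.1, t p.2) else (t p.2, t p.1))
      (fun q _ => if t q.1 < t q.2 then (t q.1, t q.2) else (t q.2, t q.1))
    · intro p hp
      simp only [mem_filter, mem_univ, true_and] at hp ⊢
      have hne : t p.1 ≠ t p.2 := fun h => absurd (t.injective h) (ne_of_lt hp.1)
      rcases lt_or_gt_of_ne hne with h | h
      · rw [if_pos h]
        refine ⟨h, ?_⟩
        simp only [htt]
        exact Or.inl ⟨hp.2, not_lt_of_gt hp.1⟩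
      · rw [if_neg (not_lt_of_gt h)]
        refine ⟨h, ?_⟩
        simp only [htt]
        exact Or.inr ⟨hp.1, not_lt_of_gt hp.2⟩
    · intro q hq
      simp only [mem_filter, mem_univ, true_and] at hq ⊢
      obtain ⟨hq1, hq2⟩ := hq
      rcases hq2 with ⟨hc, hnf⟩ | ⟨hf, hnc⟩
      · have h : ¬ (t q.2 < t q.1) := hnf
        have h' : t q.1 < t q.2 := by
          rcases lt_or_gt_of_ne (fun e => absurd (t.injective e) (ne_of_lt hq1)) with h1 | h1
          · exact h1
          · exact absurd h1 hnf
        rw [if_pos h']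
        exact ⟨h', by simpa [htt] using hc⟩
      · rw [if_neg (not_lt_of_gt hf)]
        have : u q.1 < u q.2 := by
          rcases lt_or_gt_of_ne (fun e : u q.1 = u q.2 => absurd (u.injective e) (ne_of_lt hq1)) with h1 | h1
          · exact h1
          · exact absurd h1 hnc
        exact ⟨hf, by simpa [htt] using this⟩
    · intro p hp
      simp only [mem_filter, mem_univ, true_and] at hp
      have hne : t p.1 ≠ t p.2 := fun h => absurd (t.injective h) (ne_of_lt hp.1)
      rcases lt_or_gt_of_ne hne with h | h
      · simp [if_pos h, htt, hp.1, not_lt_of_gt hp.1]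
      · rw [if_neg (not_lt_of_gt h)]
        simp only [htt]
        rw [if_neg (not_lt_of_gt hp.1)]
    · intro q hq
      simp only [mem_filter, mem_univ, true_and] at hq
      have hne : t q.1 ≠ t q.2 := fun h => absurd (t.injective h) (ne_of_lt hq.1)
      rcases lt_or_gt_of_ne hne with h | h
      · simp [if_pos h, htt, hq.1, not_lt_of_gt hq.1]
      · rw [if_neg (not_lt_of_gt h)]
        simp only [htt]
        rw [if_neg (not_lt_of_gt hq.1)]
  -- notation for the counts
  set B := (univ.filter (fun k => i < k ∧ k < j ∧ u i < u k ∧ u k < u j)).card with hB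
  set X := (univ.filter (fun k : Fin N => i < k ∧ k < j ∧ u k < u i)).card with hX
  set Y := (univ.filter (fun k : Fin N => i < k ∧ k < j ∧ u j < u k)).card with hY
  set m := (univ.filter (fun k : Fin N => i < k ∧ k < j)).card with hm
  -- classification of flipped pairs
  have hclass : ∀ k l : Fin N, k < l → t l < t k →
      (k = i ∧ l = j) ∨ (k = i ∧ i < l ∧ l < j) ∨ (l = j ∧ i < k ∧ k < j) := by
    intro k l hkl hflip
    rcases eq_or_ne k i with hki | hki
    · rcases eq_or_ne l j with hlj | hlj
      · exact Or.inl ⟨hki, hlj⟩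
      · have hli : l ≠ i := by rw [hki] at hkl; exact ne_of_gt hkl
        rw [htk l hli hlj, hki, hti] at hflip
        refine Or.inr (Or.inl ⟨hki, ?_, hflip⟩)
        rw [hki] at hkl; exact hkl
    · rcases eq_or_ne l j with hlj | hlj
      · have hkj : k ≠ j := by rw [hlj] at hkl; exact ne_of_lt hkl
        rw [htk k hki hkj, hlj, htj] at hflip
        refine Or.inr (Or.inr ⟨hlj, hflip, ?_⟩)
        rw [hlj] at hkl; exact hkl
      · rcases eq_or_ne k j with hkj | hkj
        · have hli : l ≠ i := by
            intro e
            rw [hkj, e] at hkl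
            exact absurd (lt_trans hij hkl) (lt_irrefl i)
          rw [htk l hli hlj, hkj, htj] at hflip
          rw [hkj] at hkl
          exact absurd (lt_trans hij (lt_trans hkl hflip)) (lt_irrefl i)
        · rcases eq_or_ne l i with hli | hli
          · rw [htk k hki hkj, hli, hti] at hflip
            rw [hli] at hkl
            exact absurd (lt_trans hkl (lt_trans hij hflip)) (lt_irrefl k)
          · rw [htk k hki hkj, htk l hli hlj] at hflip
            exact absurd hkl (not_lt_of_gt hflip)
  -- step 3 : card S2 + 2 * C = inversions u + F
  set C := (univ.filter (fun p : Fin N × Fin N =>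
      p.1 < p.2 ∧ u p.2 < u p.1 ∧ t p.2 < t p.1)).card with hC
  set F := (univ.filter (fun p : Fin N × Fin N => p.1 < p.2 ∧ t p.2 < t p.1)).card with hF
  have step3 : (univ.filter (fun p : Fin N × Fin N => p.1 < p.2 ∧
        Xor' (u p.2 < u p.1) (t p.2 < t p.1))).card + 2 * C = inversions u + F := by
    rw [inversions, hC, hF]
    simp only [Finset.card_filter]
    rw [Finset.mul_sum, ← Finset.sum_add_distrib, ← Finset.sum_add_distrib]
    apply Finset.sum_congr rfl
    intro p _
    by_cases h1 : p.1 < p.2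
    · by_cases h2 : u p.2 < u p.1 <;> by_cases h3 : t p.2 < t p.1 <;>
        simp [Xor', h1, h2, h3]
    · simp [h1]
  -- step 4 : F = 2 * m + 1
  have hIoo : ∀ (P : Fin N → Prop) [DecidablePred P],
      Function.Injective (fun k : Fin N => ((i,k) : Fin N × Fin N)) ∧
      Function.Injective (fun k : Fin N => ((k,j) : Fin N × Fin N)) := by
    intro P _
    constructor
    · intro a b hab; exact (Prod.mk.injEq _ _ _ _ ▸ hab).2
    · intro a b hab; exact (Prod.mk.injEq _ _ _ _ ▸ hab).1
  have hinj1 : Function.Injective (fun k : Fin N => ((i,k) : Fin N × Fin N)) := by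
    intro a b hab; exact (Prod.mk.injEq _ _ _ _ ▸ hab).2
  have hinj2 : Function.Injective (fun k : Fin N => ((k,j) : Fin N × Fin N)) := by
    intro a b hab; exact (Prod.mk.injEq _ _ _ _ ▸ hab).1
  have step4 : F = 2 * m + 1 := by
    have hset : (univ.filter (fun p : Fin N × Fin N => p.1 < p.2 ∧ t p.2 < t p.1)) =
        insert (i,j) (((univ.filter (fun k : Fin N => i < k ∧ k < j)).image (fun k => (i,k))) ∪
          ((univ.filter (fun k : Fin N => i < k ∧ k < j)).image (fun k => (k,j)))) := by
      ext ⟨k, l⟩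
      simp only [mem_filter, mem_univ, true_and, mem_insert, mem_union, mem_image,
        Prod.mk.injEq]
      constructor
      · rintro ⟨hkl, hflip⟩
        rcases hclass k l hkl hflip with ⟨rfl, rfl⟩ | ⟨rfl, h1, h2⟩ | ⟨rfl, h1, h2⟩
        · exact Or.inl ⟨rfl, rfl⟩
        · exact Or.inr (Or.inl ⟨l, ⟨h1, h2⟩, rfl, rfl⟩)
        · exact Or.inr (Or.inr ⟨k, ⟨h1, h2⟩, rfl, rfl⟩)
      · rintro (⟨rfl, rfl⟩ | ⟨a, ⟨h1, h2⟩, rfl, rfl⟩ | ⟨a, ⟨h1, h2⟩, rfl, rfl⟩)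
        · exact ⟨hij, by rw [hti, htj]; exact hij⟩
        · refine ⟨h1, ?_⟩
          rw [hti, htk a (ne_of_gt h1) (ne_of_lt h2)]
          exact h2
        · refine ⟨h2, ?_⟩
          rw [htj, htk a (ne_of_gt h1) (ne_of_lt h2)]
          exact h1
    rw [hF, hset]
    have hdisj : Disjoint ((univ.filter (fun k : Fin N => i < k ∧ k < j)).image (fun k => ((i,k) : Fin N × Fin N)))
        ((univ.filter (fun k : Fin N => i < k ∧ k < j)).image (fun k => (k,j))) := by
      rw [Finset.disjoint_left]
      rintro ⟨k, l⟩ h1 h2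
      simp only [mem_image, mem_filter, mem_univ, true_and, Prod.mk.injEq] at h1 h2
      obtain ⟨a, ⟨ha1, ha2⟩, rfl, rfl⟩ := h1
      obtain ⟨b, ⟨hb1, hb2⟩, hb3, hb4⟩ := h2
      exact absurd hb3 (ne_of_gt hb1)
    have hnotmem : ((i,j) : Fin N × Fin N) ∉
        (((univ.filter (fun k : Fin N => i < k ∧ k < j)).image (fun k => ((i,k) : Fin N × Fin N))) ∪
          ((univ.filter (fun k : Fin N => i < k ∧ k < j)).image (fun k => (k,j)))) := by
      simp only [mem_union, mem_image, mem_filter, mem_univ, true_and, Prod.mk.injEq]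
      intro hmem
      rcases hmem with ⟨a, ⟨h1, h2⟩, he⟩ | ⟨a, ⟨h1, h2⟩, he, -⟩
      · rw [he] at h2; exact absurd h2 (lt_irrefl j)
      · rw [he] at h1; exact absurd h1 (lt_irrefl i)
    rw [Finset.card_insert_of_notMem hnotmem, Finset.card_union_of_disjoint hdisj,
      Finset.card_image_of_injective _ hinj1, Finset.card_image_of_injective _ hinj2, hm]
    ring
  -- step 5 : C = X + Y
  have step5 : C = X + Y := by
    have hset : (univ.filter (fun p : Fin N × Fin N => p.1 < p.2 ∧ u p.2 < u p.1 ∧ t p.2 < t p.1)) =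
        ((univ.filter (fun k : Fin N => i < k ∧ k < j ∧ u k < u i)).image (fun k => (i,k))) ∪
          ((univ.filter (fun k : Fin N => i < k ∧ k < j ∧ u j < u k)).image (fun k => (k,j))) := by
      ext ⟨k, l⟩
      simp only [mem_filter, mem_univ, true_and, mem_union, mem_image, Prod.mk.injEq]
      constructor
      · rintro ⟨hkl, hcr, hflip⟩
        rcases hclass k l hkl hflip with ⟨rfl, rfl⟩ | ⟨rfl, h1, h2⟩ | ⟨rfl, h1, h2⟩
        · exact absurd hcr (not_lt_of_gt huv)
        · exact Or.inl ⟨l, ⟨h1, h2, hcr⟩, rfl, rfl⟩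
        · exact Or.inr ⟨k, ⟨h1, h2, hcr⟩, rfl, rfl⟩
      · rintro (⟨a, ⟨h1, h2, h3⟩, rfl, rfl⟩ | ⟨a, ⟨h1, h2, h3⟩, rfl, rfl⟩)
        · refine ⟨h1, h3, ?_⟩
          rw [hti, htk a (ne_of_gt h1) (ne_of_lt h2)]
          exact h2
        · refine ⟨h2, h3, ?_⟩
          rw [htj, htk a (ne_of_gt h1) (ne_of_lt h2)]
          exact h1
    have hdisj : Disjoint ((univ.filter (fun k : Fin N => i < k ∧ k < j ∧ u k < u i)).image (fun k => ((i,k) : Fin N × Fin N)))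
        ((univ.filter (fun k : Fin N => i < k ∧ k < j ∧ u j < u k)).image (fun k => (k,j))) := by
      rw [Finset.disjoint_left]
      rintro ⟨k, l⟩ h1 h2
      simp only [mem_image, mem_filter, mem_univ, true_and, Prod.mk.injEq] at h1 h2
      obtain ⟨a, ⟨ha1, ha2, ha3⟩, rfl, rfl⟩ := h1
      obtain ⟨b, ⟨hb1, hb2, hb3⟩, hb4, hb5⟩ := h2
      exact absurd hb4 (ne_of_gt hb1)
    rw [hC, hset, Finset.card_union_of_disjoint hdisj,
      Finset.card_image_of_injective _ hinj1, Finset.card_image_of_injective _ hinj2]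
  -- step 6 : m = B + X + Y
  have step6 : m = B + X + Y := by
    rw [hm, hB, hX, hY]
    simp only [Finset.card_filter]
    rw [← Finset.sum_add_distrib, ← Finset.sum_add_distrib]
    apply Finset.sum_congr rfl
    intro k _
    by_cases h1 : i < k
    · by_cases h2 : k < j
      · have hki : u k ≠ u i := fun e => absurd (u.injective e) (ne_of_gt h1)
        have hkj : u k ≠ u j := fun e => absurd (u.injective e) (ne_of_lt h2)
        rcases lt_or_gt_of_ne hki with h3 | h3
        · have h4 : ¬ (u i < u k ∧ u k < u j) := fun hh => absurd hh.1 (not_lt_of_gt h3)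
          have h5 : ¬ (u j < u k) := fun hh => absurd (lt_trans hh h3) (not_lt_of_gt huv)
          simp [h1, h2, h3, h4, h5]
        · rcases lt_or_gt_of_ne hkj with h4 | h4
          · have h5 : ¬ (u k < u i) := not_lt_of_gt h3
            have h6 : ¬ (u j < u k) := not_lt_of_gt h4
            simp [h1, h2, h3, h4, h5, h6]
          · have h5 : ¬ (u k < u i) := not_lt_of_gt h3
            have h6 : ¬ (u i < u k ∧ u k < u j) := fun hh => absurd hh.2 (not_lt_of_gt h4)
            simp [h1, h2, h4, h5, h6]
      · simp [h2]
    · simp [h1]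
  omega

lemma inv_mul_swap' (u : Equiv.Perm (Fin N)) {i j : Fin N} (hij : i < j) (huv : u j < u i) :
    inversions u = inversions (u * Equiv.swap i j) +
      2 * ((univ.filter (fun k => i < k ∧ k < j ∧ u j < u k ∧ u k < u i)).card) + 1 := by
  classical
  set u' := u * Equiv.swap i j with hu'
  have h1 : u' i = u j := by simp [hu', Equiv.Perm.mul_apply]
  have h2 : u' j = u i := by simp [hu', Equiv.Perm.mul_apply]
  have h3 : u' i < u' j := by rw [h1, h2]; exact huv
  have key := inv_mul_swap u' hij h3
  have h4 : u' * Equiv.swap i j = u := by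
    rw [hu', mul_assoc, Equiv.swap_mul_self, mul_one]
  rw [h4] at key
  have h5 : (univ.filter (fun k => i < k ∧ k < j ∧ u' i < u' k ∧ u' k < u' j)).card
      = (univ.filter (fun k => i < k ∧ k < j ∧ u j < u k ∧ u k < u i)).card := by
    congr 1
    apply Finset.filter_congr
    intro k _
    by_cases hik : i < k
    · by_cases hkj : k < j
      · have : u' k = u k := by
          simp [hu', Equiv.Perm.mul_apply,
            Equiv.swap_apply_of_ne_of_ne (ne_of_gt hik) (ne_of_lt hkj)]
        rw [h1, h2, this]
      · simp [hkj]
    · simp [hik]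
  rw [h5] at key
  exact key

/-- covering condition -/
def isCov (u : Equiv.Perm (Fin N)) (i j : Fin N) : Prop :=
  u i < u j ∧ ∀ k, i < k → k < j → ¬(u i < u k ∧ u k < u j)

lemma inv_swap_succ_iff (u : Equiv.Perm (Fin N)) {i j : Fin N} (hij : i < j) :
    inversions (u * Equiv.swap i j) = inversions u + 1 ↔ isCov u i j := by
  classical
  constructor
  · intro h
    have hne : u i ≠ u j := fun e => absurd (u.injective e) (ne_of_lt hij)
    rcases lt_or_gt_of_ne hne with hlt | hgt
    · have key := inv_mul_swap u hij hlt
      have hB : (univ.filter (fun k => i < k ∧ k < j ∧ u i < u k ∧ u k < u j)).card = 0 := by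
        omega
      refine ⟨hlt, fun k h1 h2 h3 => ?_⟩
      rw [Finset.card_eq_zero, Finset.filter_eq_empty_iff] at hB
      exact hB (Finset.mem_univ k) ⟨h1, h2, h3.1, h3.2⟩
    · have key := inv_mul_swap' u hij hgt
      omega
  · rintro ⟨hlt, hcov⟩
    have key := inv_mul_swap u hij hlt
    have hB : (univ.filter (fun k => i < k ∧ k < j ∧ u i < u k ∧ u k < u j)).card = 0 := by
      rw [Finset.card_eq_zero, Finset.filter_eq_empty_iff]
      intro k _ hk
      exact hcov k hk.1 hk.2.1 ⟨hk.2.2.1, hk.2.2.2⟩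
    omega

lemma bruhatStep_destruct_aux {σ τ : Equiv.Perm (Fin N)} {i j : Fin N} (hij : i < j)
    (heq : τ = σ * Equiv.swap i j) (hle : inversions σ ≤ inversions τ) :
    ∃ B, inversions τ = inversions σ + 2 * B + 1 := by
  classical
  have hvne : σ i ≠ σ j := fun e => absurd (σ.injective e) (ne_of_lt hij)
  rcases lt_or_gt_of_ne hvne with hlt | hgt
  · have key := inv_mul_swap σ hij hlt
    rw [← heq] at key
    exact ⟨_, key⟩
  · have key := inv_mul_swap' σ hij hgt
    rw [← heq] at key
    omega

lemma bruhatStep_destruct {σ τ : Equiv.Perm (Fin N)} (h : bruhatStep σ τ) :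
    ∃ i j : Fin N, i < j ∧ τ = σ * Equiv.swap i j ∧
      ∃ B, inversions τ = inversions σ + 2 * B + 1 := by
  classical
  obtain ⟨i, j, hne, heq, hle⟩ := h
  rcases lt_or_gt_of_ne hne with hij | hij
  · exact ⟨i, j, hij, heq, bruhatStep_destruct_aux hij heq hle⟩
  · rw [Equiv.swap_comm] at heq
    exact ⟨j, i, hij, heq, bruhatStep_destruct_aux hij heq hle⟩

lemma bruhatStep_lt {σ τ : Equiv.Perm (Fin N)} (h : bruhatStep σ τ) :
    inversions σ < inversions τ := by
  obtain ⟨i, j, _, _, B, hB⟩ := bruhatStep_destruct h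
  omega

lemma bruhatLE_inv_le {σ τ : Equiv.Perm (Fin N)} (h : bruhatLE σ τ) :
    inversions σ ≤ inversions τ := by
  induction h with
  | refl => exact le_refl _
  | tail _ hstep ih => exact le_trans ih (le_of_lt (bruhatStep_lt hstep))

lemma bruhatLE_eq {σ τ : Equiv.Perm (Fin N)} (h : bruhatLE σ τ)
    (he : inversions σ = inversions τ) : σ = τ := by
  induction h with
  | refl => rfl
  | tail hle hstep ih =>
    exfalso
    have h1 := bruhatLE_inv_le hle
    have h2 := bruhatStep_lt hstep
    omega

lemma bruhatLE_one_step {σ τ : Equiv.Perm (Fin N)} (h : bruhatLE σ τ)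
    (he : inversions τ = inversions σ + 1) :
    ∃ i j : Fin N, i < j ∧ τ = σ * Equiv.swap i j ∧ isCov σ i j := by
  induction h with
  | refl => omega
  | @tail b c hle hstep ih =>
    have h1 := bruhatLE_inv_le hle
    have h2 := bruhatStep_lt hstep
    have hb : inversions b = inversions σ := by omega
    have hbs : b = σ := (bruhatLE_eq hle hb.symm).symm
    subst hbs
    obtain ⟨i, j, hij, heq, B, hB⟩ := bruhatStep_destruct hstep
    refine ⟨i, j, hij, heq, ?_⟩
    rw [← (inv_swap_succ_iff b hij)]
    rw [← heq]
    omega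

lemma bruhatLE_two_step {σ τ : Equiv.Perm (Fin N)} (h : bruhatLE σ τ)
    (he : inversions τ = inversions σ + 2) :
    ∃ z : Equiv.Perm (Fin N), inversions z = inversions σ + 1 ∧
      (∃ i j : Fin N, i < j ∧ z = σ * Equiv.swap i j ∧ isCov σ i j) ∧
      (∃ i j : Fin N, i < j ∧ τ = z * Equiv.swap i j ∧ isCov z i j) := by
  induction h with
  | refl => omega
  | @tail b c hle hstep ih =>
    have h1 := bruhatLE_inv_le hle
    obtain ⟨i, j, hij, heq, B, hB⟩ := bruhatStep_destruct hstep
    have hb : inversions b = inversions σ ∨ inversions b = inversions σ + 1 := by omega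
    rcases hb with hb | hb
    · exfalso
      have hbs : b = σ := (bruhatLE_eq hle hb.symm).symm
      subst hbs
      omega
    · refine ⟨b, hb, bruhatLE_one_step hle hb, i, j, hij, heq, ?_⟩
      rw [← (inv_swap_succ_iff b hij), ← heq]
      omega

-- helper: values of u * swap
lemma mulswap_left (u : Equiv.Perm (Fin N)) (i j : Fin N) : (u * Equiv.swap i j) i = u j := by
  simp [Equiv.Perm.mul_apply]

lemma mulswap_right (u : Equiv.Perm (Fin N)) (i j : Fin N) : (u * Equiv.swap i j) j = u i := by
  simp [Equiv.Perm.mul_apply]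

lemma mulswap_other (u : Equiv.Perm (Fin N)) {i j k : Fin N} (h1 : k ≠ i) (h2 : k ≠ j) :
    (u * Equiv.swap i j) k = u k := by
  simp [Equiv.Perm.mul_apply, Equiv.swap_apply_of_ne_of_ne h1 h2]

lemma val_ne (u : Equiv.Perm (Fin N)) {k l : Fin N} (h : k ≠ l) : u k ≠ u l :=
  fun e => h (u.injective e)

lemma pathA {u : Equiv.Perm (Fin N)} {α β γ : Fin N} (h1 : α < β) (h2 : β < γ)
    (hc1 : isCov u α β) (hc2 : isCov (u * Equiv.swap α β) β γ) :
    (isCov u β γ ∧ ¬ isCov u α γ) ∨ (isCov u α γ ∧ ¬ isCov u β γ) := by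
  obtain ⟨hv1, hk1⟩ := hc1
  obtain ⟨hv2, hk2⟩ := hc2
  rw [mulswap_right] at hv2
  rw [mulswap_other u (ne_of_gt (lt_trans h1 h2)) (ne_of_gt h2)] at hv2
  -- hv2 : u α < u γ
  have hk2' : ∀ k, β < k → k < γ → ¬(u α < u k ∧ u k < u γ) := by
    intro k hka hkb hcon
    have hne1 : k ≠ α := ne_of_gt (lt_trans h1 hka)
    have hne2 : k ≠ β := ne_of_gt hka
    have := hk2 k hka hkb
    rw [mulswap_right, mulswap_other u (ne_of_gt (lt_trans h1 h2)) (ne_of_gt h2),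
      mulswap_other u hne1 hne2] at this
    exact this hcon
  have hqr : u β ≠ u γ := val_ne u (ne_of_lt h2)
  rcases lt_or_gt_of_ne hqr with hlt | hgt
  · -- q < r : good = (β,γ), bad = (α,γ)
    left
    constructor
    · refine ⟨hlt, fun k hka hkb hcon => ?_⟩
      exact hk2' k hka hkb ⟨lt_trans hv1 hcon.1, hcon.2⟩
    · rintro ⟨-, hbad⟩
      exact hbad β h1 h2 ⟨hv1, hlt⟩
  · -- r < q : good = (α,γ), bad = (β,γ)
    right
    constructor
    · refine ⟨hv2, fun k hka hkb hcon => ?_⟩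
      rcases lt_trichotomy k β with hk | hk | hk
      · exact hk1 k hka hk ⟨hcon.1, lt_trans hcon.2 hgt⟩
      · rw [hk] at hcon
        exact absurd hcon.2 (not_lt_of_gt hgt)
      · exact hk2' k hk hkb hcon
    · rintro ⟨hbad, -⟩
      exact absurd hbad (not_lt_of_gt hgt)

lemma pathB {u : Equiv.Perm (Fin N)} {α β γ : Fin N} (h1 : α < β) (h2 : β < γ)
    (hc1 : isCov u β γ) (hc2 : isCov (u * Equiv.swap β γ) α γ) :
    isCov u α β ∧ ¬ isCov u α γ := by
  obtain ⟨hv1, hk1⟩ := hc1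
  obtain ⟨hv2, hk2⟩ := hc2
  rw [mulswap_right, mulswap_other u (ne_of_lt h1) (ne_of_lt (lt_trans h1 h2))] at hv2
  -- hv2 : u α < u β
  have hk2' : ∀ k, α < k → k < γ → k ≠ β → ¬(u α < u k ∧ u k < u β) := by
    intro k hka hkb hkc hcon
    have := hk2 k hka hkb
    rw [mulswap_right, mulswap_other u (ne_of_lt h1) (ne_of_lt (lt_trans h1 h2)),
      mulswap_other u hkc (ne_of_lt hkb)] at this
    exact this hcon
  constructor
  · refine ⟨hv2, fun k hka hkb hcon => ?_⟩
    exact hk2' k hka (lt_trans hkb h2) (ne_of_lt hkb) hcon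
  · rintro ⟨-, hbad⟩
    exact hbad β h1 h2 ⟨hv2, hv1⟩

lemma pathC {u : Equiv.Perm (Fin N)} {α β γ : Fin N} (h1 : α < β) (h2 : β < γ)
    (hc1 : isCov u α γ) (hc2 : isCov (u * Equiv.swap α γ) α β) :
    isCov u α β ∧ ¬ isCov u β γ := by
  obtain ⟨hv1, hk1⟩ := hc1
  obtain ⟨hv2, hk2⟩ := hc2
  rw [mulswap_left, mulswap_other u (ne_of_gt h1) (ne_of_lt h2)] at hv2
  -- hv2 : u γ < u β
  have hk2' : ∀ k, α < k → k < β → ¬(u γ < u k ∧ u k < u β) := by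
    intro k hka hkb hcon
    have := hk2 k hka hkb
    rw [mulswap_left, mulswap_other u (ne_of_gt h1) (ne_of_lt h2),
      mulswap_other u (ne_of_gt hka) (ne_of_lt (lt_trans hkb h2))] at this
    exact this hcon
  constructor
  · refine ⟨lt_trans hv1 hv2, fun k hka hkb hcon => ?_⟩
    have hneg : u k ≠ u γ := val_ne u (ne_of_lt (lt_trans hkb h2))
    rcases lt_or_gt_of_ne hneg with hk | hk
    · exact hk1 k hka (lt_trans hkb h2) ⟨hcon.1, hk⟩
    · exact hk2' k hka hkb ⟨hk, hcon.2⟩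
  · rintro ⟨hbad, -⟩
    exact absurd hbad (not_lt_of_gt hv2)

lemma pathA' {u : Equiv.Perm (Fin N)} {α β γ : Fin N} (h1 : α < β) (h2 : β < γ)
    (hc1 : isCov u α β) (hc2 : isCov (u * Equiv.swap α β) α γ) :
    isCov u β γ ∧ ¬ isCov u α γ := by
  obtain ⟨hv1, hk1⟩ := hc1
  obtain ⟨hv2, hk2⟩ := hc2
  rw [mulswap_left, mulswap_other u (ne_of_gt (lt_trans h1 h2)) (ne_of_gt h2)] at hv2
  -- hv2 : u β < u γ
  have hk2' : ∀ k, α < k → k < γ → k ≠ β → ¬(u β < u k ∧ u k < u γ) := by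
    intro k hka hkb hkc hcon
    have := hk2 k hka hkb
    rw [mulswap_left, mulswap_other u (ne_of_gt (lt_trans h1 h2)) (ne_of_gt h2),
      mulswap_other u (ne_of_gt hka) hkc] at this
    exact this hcon
  constructor
  · refine ⟨hv2, fun k hka hkb hcon => ?_⟩
    exact hk2' k (lt_trans h1 hka) hkb (ne_of_gt hka) hcon
  · rintro ⟨-, hbad⟩
    exact hbad β h1 h2 ⟨hv1, hv2⟩

lemma pathB' {u : Equiv.Perm (Fin N)} {α β γ : Fin N} (h1 : α < β) (h2 : β < γ)
    (hc1 : isCov u β γ) (hc2 : isCov (u * Equiv.swap β γ) α β) :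
    (isCov u α β ∧ ¬ isCov u α γ) ∨ (isCov u α γ ∧ ¬ isCov u α β) := by
  obtain ⟨hv1, hk1⟩ := hc1
  obtain ⟨hv2, hk2⟩ := hc2
  rw [mulswap_left, mulswap_other u (ne_of_lt h1) (ne_of_lt (lt_trans h1 h2))] at hv2
  -- hv2 : u α < u γ
  have hk2' : ∀ k, α < k → k < β → ¬(u α < u k ∧ u k < u γ) := by
    intro k hka hkb hcon
    have := hk2 k hka hkb
    rw [mulswap_left, mulswap_other u (ne_of_lt h1) (ne_of_lt (lt_trans h1 h2)),
      mulswap_other u (ne_of_lt hkb) (ne_of_lt (lt_trans hkb h2))] at this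
    exact this hcon
  have hpq : u α ≠ u β := val_ne u (ne_of_lt h1)
  rcases lt_or_gt_of_ne hpq with hlt | hgt
  · left
    constructor
    · refine ⟨hlt, fun k hka hkb hcon => ?_⟩
      exact hk2' k hka hkb ⟨hcon.1, lt_trans hcon.2 hv1⟩
    · rintro ⟨-, hbad⟩
      exact hbad β h1 h2 ⟨hlt, hv1⟩
  · right
    constructor
    · refine ⟨hv2, fun k hka hkb hcon => ?_⟩
      rcases lt_trichotomy k β with hk | hk | hk
      · exact hk2' k hka hk hcon
      · rw [hk] at hcon
        exact absurd hcon.1 (not_lt_of_gt hgt)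
      · exact hk1 k hk hkb ⟨lt_trans hgt hcon.1, hcon.2⟩
    · rintro ⟨hbad, -⟩
      exact absurd hbad (not_lt_of_gt hgt)

lemma pathC' {u : Equiv.Perm (Fin N)} {α β γ : Fin N} (h1 : α < β) (h2 : β < γ)
    (hc1 : isCov u α γ) (hc2 : isCov (u * Equiv.swap α γ) β γ) :
    isCov u β γ ∧ ¬ isCov u α β := by
  obtain ⟨hv1, hk1⟩ := hc1
  obtain ⟨hv2, hk2⟩ := hc2
  rw [mulswap_right, mulswap_other u (ne_of_gt h1) (ne_of_lt h2)] at hv2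
  -- hv2 : u β < u α
  have hk2' : ∀ k, β < k → k < γ → ¬(u β < u k ∧ u k < u α) := by
    intro k hka hkb hcon
    have := hk2 k hka hkb
    rw [mulswap_right, mulswap_other u (ne_of_gt h1) (ne_of_lt h2),
      mulswap_other u (ne_of_gt (lt_trans h1 hka)) (ne_of_lt hkb)] at this
    exact this hcon
  constructor
  · refine ⟨lt_trans hv2 hv1, fun k hka hkb hcon => ?_⟩
    have hneg : u k ≠ u α := val_ne u (ne_of_gt (lt_trans h1 hka))
    rcases lt_or_gt_of_ne hneg with hk | hk
    · exact hk2' k hka hkb ⟨hcon.1, hk⟩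
    · exact hk1 k (lt_trans h1 hka) hkb ⟨hk, hcon.2⟩
  · rintro ⟨hbad, -⟩
    exact absurd hbad (not_lt_of_gt hv2)

lemma path_disjoint {u : Equiv.Perm (Fin N)} {a b c d : Fin N} (hab : a < b) (hcd : c < d)
    (h1 : a ≠ c) (h2 : a ≠ d) (h3 : b ≠ c) (h4 : b ≠ d)
    (hc1 : isCov u a b) (hc2 : isCov (u * Equiv.swap a b) c d) :
    isCov u c d := by
  obtain ⟨hv1, hk1⟩ := hc1
  obtain ⟨hv2, hk2⟩ := hc2
  rw [mulswap_other u h1.symm h3.symm, mulswap_other u h2.symm h4.symm] at hv2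
  -- hv2 : u c < u d
  refine ⟨hv2, fun k hka hkb hcon => ?_⟩
  rcases eq_or_ne k a with hke | hke
  · -- k = a, with u a ∈ (u c, u d); derive False
    rw [hke] at hka hkb hcon
    have hba := hk2 a hka hkb
    rw [mulswap_left, mulswap_other u h1.symm h3.symm, mulswap_other u h2.symm h4.symm] at hba
    have hucb : u c < u b := lt_trans hcon.1 hv1
    have hbd : u d < u b := by
      rcases lt_or_gt_of_ne (val_ne u h4) with hx | hx
      · exact absurd ⟨hucb, hx⟩ hba
      · exact hx
    rcases lt_trichotomy b d with hbd' | hbd' | hbd'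
    · have hcb : c < b := lt_trans hka hab
      have := hk2 b hcb hbd'
      rw [mulswap_right, mulswap_other u h1.symm h3.symm, mulswap_other u h2.symm h4.symm] at this
      exact this ⟨hcon.1, hcon.2⟩
    · exact h4 hbd'
    · exact hk1 d hkb hbd' ⟨hcon.2, hbd⟩
  · rcases eq_or_ne k b with hke' | hke'
    · -- k = b, with u b ∈ (u c, u d); derive False
      rw [hke'] at hka hkb hcon
      have hba := hk2 b hka hkb
      rw [mulswap_right, mulswap_other u h1.symm h3.symm, mulswap_other u h2.symm h4.symm] at hba
      have had : u a < u d := lt_trans hv1 hcon.2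
      have hac : u a < u c := by
        rcases lt_or_gt_of_ne (val_ne u h1) with hx | hx
        · exact hx
        · exact absurd ⟨hx, had⟩ hba
      rcases lt_trichotomy a c with hac' | hac' | hac'
      · exact hk1 c hac' hka ⟨hac, hcon.1⟩
      · exact h1 hac'
      · have := hk2 a hac' (lt_trans hab hkb)
        rw [mulswap_left, mulswap_other u h1.symm h3.symm, mulswap_other u h2.symm h4.symm] at this
        exact this ⟨hcon.1, hcon.2⟩
    · have := hk2 k hka hkb
      rw [mulswap_other u h1.symm h3.symm, mulswap_other u h2.symm h4.symm,
        mulswap_other u hke hke'] at this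
      exact this hcon

lemma swap_eq_of_apply {z w x y : Fin N} (hxy : x ≠ y) (h : Equiv.swap z w x = y) :
    Equiv.swap z w = Equiv.swap x y := by
  have hne : Equiv.swap z w x ≠ x := by rw [h]; exact hxy.symm
  rcases Equiv.swap_apply_ne_self_iff.mp hne with ⟨hzw, hx | hx⟩
  · subst hx
    rw [Equiv.swap_apply_left] at h
    subst h; rfl
  · subst hx
    rw [Equiv.swap_apply_right] at h
    subst h
    exact Equiv.swap_comm _ _
lemma swap_pair_eq {x y z w : Fin N} (h1 : x < y) (h2 : z < w)
    (h : Equiv.swap x y = Equiv.swap z w) : x = z ∧ y = w := by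
  have hx : Equiv.swap z w x = y := by rw [← h]; exact Equiv.swap_apply_left x y
  have hne : Equiv.swap z w x ≠ x := by rw [hx]; exact (ne_of_lt h1).symm
  rcases Equiv.swap_apply_ne_self_iff.mp hne with ⟨hzw, hxx | hxx⟩
  · subst hxx
    rw [Equiv.swap_apply_left] at hx
    exact ⟨rfl, hx.symm⟩
  · subst hxx
    rw [Equiv.swap_apply_right] at hx
    exfalso
    rw [hx] at h2
    exact absurd (lt_trans h1 h2) (lt_irrefl x)
lemma factor_T2 {x y : Fin N} {T2 V : Equiv.Perm (Fin N)}
    (heq : Equiv.swap x y * T2 = V) : T2 = Equiv.swap x y * V := by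
  rw [← heq, ← mul_assoc, Equiv.swap_mul_self, one_mul]
lemma factor_moves {x y z w : Fin N} {V : Equiv.Perm (Fin N)} (hxy : x ≠ y)
    (heq : Equiv.swap x y * Equiv.swap z w = V) (hV : V ≠ 1) : V x ≠ x ∧ V y ≠ y := by
  have hT2 := factor_T2 heq
  constructor
  · intro hx
    have h1 : Equiv.swap z w x = y := by rw [hT2, Equiv.Perm.mul_apply, hx, Equiv.swap_apply_left]
    have h2 := swap_eq_of_apply hxy h1
    rw [h2] at heq
    rw [Equiv.swap_mul_self] at heq
    exact hV heq.symm
  · intro hy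
    have h1 : Equiv.swap z w y = x := by rw [hT2, Equiv.Perm.mul_apply, hy, Equiv.swap_apply_right]
    have h2 := swap_eq_of_apply hxy.symm h1
    rw [Equiv.swap_comm y x] at h2
    rw [h2] at heq
    rw [Equiv.swap_mul_self] at heq
    exact hV heq.symm
lemma factor_partner {x y z w : Fin N} (hxy : x ≠ y) {V : Equiv.Perm (Fin N)}
    (heq : Equiv.swap x y * Equiv.swap z w = V) (hV2 : ∀ p, V (V p) = p)
    (hVx : V x ≠ x) (hVxy : V x ≠ y) : False := by
  have hT2 := factor_T2 heq
  have h1 : Equiv.swap z w x = V x := by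
    rw [hT2, Equiv.Perm.mul_apply, Equiv.swap_apply_of_ne_of_ne hVx hVxy]
  have h2 := swap_eq_of_apply hVx.symm h1
  have h3 : Equiv.swap z w (V x) = y := by
    rw [hT2, Equiv.Perm.mul_apply, hV2 x, Equiv.swap_apply_left]
  rw [h2, Equiv.swap_apply_right] at h3
  exact hxy h3

lemma id_a {α β γ : Fin N} (h1 : α ≠ β) (h2 : α ≠ γ) (h3 : β ≠ γ) :
    Equiv.swap α β * Equiv.swap β γ = Equiv.swap β γ * Equiv.swap α γ := by
  ext p
  simp only [Equiv.Perm.mul_apply, Equiv.swap_apply_def]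
  split_ifs <;> simp_all
lemma id_b {α β γ : Fin N} (h1 : α ≠ β) (h2 : α ≠ γ) (h3 : β ≠ γ) :
    Equiv.swap α β * Equiv.swap β γ = Equiv.swap α γ * Equiv.swap α β := by
  ext p
  simp only [Equiv.Perm.mul_apply, Equiv.swap_apply_def]
  split_ifs <;> simp_all
lemma id_c {α β γ : Fin N} (h1 : α ≠ β) (h2 : α ≠ γ) (h3 : β ≠ γ) :
    Equiv.swap α β * Equiv.swap α γ = Equiv.swap α γ * Equiv.swap β γ := by
  ext p
  simp only [Equiv.Perm.mul_apply, Equiv.swap_apply_def]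
  split_ifs <;> simp_all
lemma id_d {α β γ : Fin N} (h1 : α ≠ β) (h2 : α ≠ γ) (h3 : β ≠ γ) :
    Equiv.swap α β * Equiv.swap α γ = Equiv.swap β γ * Equiv.swap α β := by
  ext p
  simp only [Equiv.Perm.mul_apply, Equiv.swap_apply_def]
  split_ifs <;> simp_all
lemma swap_disjoint_comm {a b c d : Fin N} (h1 : a ≠ c) (h2 : a ≠ d) (h3 : b ≠ c) (h4 : b ≠ d) :
    Equiv.swap a b * Equiv.swap c d = Equiv.swap c d * Equiv.swap a b := by
  ext p
  simp only [Equiv.Perm.mul_apply, Equiv.swap_apply_def]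
  split_ifs <;> simp_all

lemma swap_mul_ne_one {x y z w : Fin N} (hxy : x < y) (hzw : z < w) (hne : ¬(x = z ∧ y = w)) :
    Equiv.swap x y * Equiv.swap z w ≠ 1 := by
  intro e
  have h1 : Equiv.swap x y = (Equiv.swap z w)⁻¹ := by
    rw [← mul_eq_one_iff_eq_inv] at *; exact e
  rw [Equiv.swap_inv] at h1
  exact hne (swap_pair_eq hxy hzw h1)

lemma classify3 {α β γ x y z w : Fin N} (h1 : α < β) (h2 : β < γ) (hxy : x ≠ y)
    {V : Equiv.Perm (Fin N)} (hV : ∀ p, p ≠ α → p ≠ β → p ≠ γ → V p = p) (hVne : V ≠ 1)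
    (heq : Equiv.swap x y * Equiv.swap z w = V) :
    Equiv.swap x y = Equiv.swap α β ∨ Equiv.swap x y = Equiv.swap β γ ∨
      Equiv.swap x y = Equiv.swap α γ := by
  obtain ⟨hmx, hmy⟩ := factor_moves hxy heq hVne
  have hx : x = α ∨ x = β ∨ x = γ := by
    by_contra hcon
    push_neg at hcon
    exact hmx (hV x hcon.1 hcon.2.1 hcon.2.2)
  have hy : y = α ∨ y = β ∨ y = γ := by
    by_contra hcon
    push_neg at hcon
    exact hmy (hV y hcon.1 hcon.2.1 hcon.2.2)
  rcases hx with rfl | rfl | rfl <;> rcases hy with rfl | rfl | rfl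
  · exact absurd rfl hxy
  · exact Or.inl rfl
  · exact Or.inr (Or.inr rfl)
  · exact Or.inl (Equiv.swap_comm _ _)
  · exact absurd rfl hxy
  · exact Or.inr (Or.inl rfl)
  · exact Or.inr (Or.inr (Equiv.swap_comm _ _))
  · exact Or.inr (Or.inl (Equiv.swap_comm _ _))
  · exact absurd rfl hxy

lemma mk_mid {s s' : Equiv.Perm (Fin N)} {x y z w : Fin N} (hxy : x < y) (hzw : z ≠ w)
    (hcov : isCov s x y) (hfac : s' = s * Equiv.swap x y * Equiv.swap z w)
    (hinv : inversions s' = inversions s + 2) :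
    inversions (s * Equiv.swap x y) = inversions s + 1 ∧
      bruhatLT s (s * Equiv.swap x y) ∧ bruhatLT (s * Equiv.swap x y) s' := by
  have hinvz : inversions (s * Equiv.swap x y) = inversions s + 1 :=
    (inv_swap_succ_iff s hxy).mpr hcov
  refine ⟨hinvz, ⟨Relation.ReflTransGen.single ⟨x, y, ne_of_lt hxy, rfl, by omega⟩, ?_⟩,
    ⟨Relation.ReflTransGen.single ⟨z, w, hzw, hfac, by omega⟩, ?_⟩⟩
  · intro e
    rw [← e] at hinvz
    omega
  · intro e
    rw [e] at hinvz
    omega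

lemma mid_destruct {s s' : Equiv.Perm (Fin N)} (hinv : inversions s' = inversions s + 2)
    {u : Equiv.Perm (Fin N)}
    (hm : inversions u = inversions s + 1 ∧ bruhatLT s u ∧ bruhatLT u s') :
    ∃ x y z w : Fin N, x < y ∧ z < w ∧ isCov s x y ∧ u = s * Equiv.swap x y ∧
      s' = u * Equiv.swap z w := by
  obtain ⟨hu, ⟨hle1, _⟩, ⟨hle2, _⟩⟩ := hm
  obtain ⟨x, y, hxy, heq, hcov⟩ := bruhatLE_one_step hle1 hu
  obtain ⟨z, w, hzw, heq2, -⟩ := bruhatLE_one_step hle2 (by omega)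
  exact ⟨x, y, z, w, hxy, hzw, hcov, heq, heq2⟩

lemma assemble {s s' : Equiv.Perm (Fin N)} (hinv : inversions s' = inversions s + 2)
    {x1 y1 x2 y2 z1 w1 z2 w2 : Fin N}
    (h11 : x1 < y1) (h22 : x2 < y2) (hpne : ¬(x1 = x2 ∧ y1 = y2))
    (hc1 : isCov s x1 y1) (hc2 : isCov s x2 y2)
    (hz1 : z1 ≠ w1) (hz2 : z2 ≠ w2)
    (hf1 : s' = s * Equiv.swap x1 y1 * Equiv.swap z1 w1)
    (hf2 : s' = s * Equiv.swap x2 y2 * Equiv.swap z2 w2)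
    (huniq : ∀ x y z w : Fin N, x < y → z < w → isCov s x y →
        Equiv.swap x y * Equiv.swap z w = Equiv.swap x1 y1 * Equiv.swap z1 w1 →
        Equiv.swap x y = Equiv.swap x1 y1 ∨ Equiv.swap x y = Equiv.swap x2 y2) :
    ∃ u₁ u₂ : Equiv.Perm (Fin N), u₁ ≠ u₂ ∧
      ∀ u : Equiv.Perm (Fin N),
        (inversions u = inversions s + 1 ∧ bruhatLT s u ∧ bruhatLT u s') ↔
        (u = u₁ ∨ u = u₂) := by
  refine ⟨s * Equiv.swap x1 y1, s * Equiv.swap x2 y2, ?_, fun u => ⟨?_, ?_⟩⟩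
  · intro e
    exact hpne (swap_pair_eq h11 h22 (mul_left_cancel e))
  · intro hm
    obtain ⟨x, y, z, w, hxy, hzw, hcov, hueq, hs'eq⟩ := mid_destruct hinv hm
    have hVeq : Equiv.swap x y * Equiv.swap z w = Equiv.swap x1 y1 * Equiv.swap z1 w1 := by
      have : s * (Equiv.swap x y * Equiv.swap z w) = s * (Equiv.swap x1 y1 * Equiv.swap z1 w1) := by
        rw [← mul_assoc, ← mul_assoc, ← hueq, ← hs'eq, hf1]
      exact mul_left_cancel this
    rcases huniq x y z w hxy hzw hcov hVeq with he | he
    · exact Or.inl (by rw [hueq, he])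
    · exact Or.inr (by rw [hueq, he])
  · rintro (rfl | rfl)
    · exact mk_mid h11 hz1 hc1 hf1 hinv
    · exact mk_mid h22 hz2 hc2 hf2 hinv

end Aux

/-- A length-2 interval in the Bruhat order of S_N is a diamond: there are exactly
two elements of intermediate length strictly between its endpoints. -/
theorem bruhat_interval_diamond {N : ℕ} (s s' : Equiv.Perm (Fin N))
    (h : bruhatLE s s') (hlen : inversions s + 2 = inversions s') :
    ∃ u₁ u₂ : Equiv.Perm (Fin N), u₁ ≠ u₂ ∧
      ∀ u : Equiv.Perm (Fin N),
        (inversions u = inversions s + 1 ∧ bruhatLT s u ∧ bruhatLT u s') ↔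
        (u = u₁ ∨ u = u₂) := by
  classical
  have hinv : inversions s' = inversions s + 2 := hlen.symm
  obtain ⟨z0, hz0inv, ⟨a, b, hab, hz0eq, hcov1⟩, ⟨c, d, hcd, hs'e, hcov2⟩⟩ :=
    bruhatLE_two_step h hinv
  rw [hz0eq] at hs'e hcov2
  by_cases hac : a = c
  · by_cases hbd : b = d
    · -- degenerate: s' = s, contradiction
      exfalso
      rw [← hac, ← hbd] at hs'e
      rw [hs'e, mul_assoc, Equiv.swap_mul_self, mul_one] at hinv
      omega
    · rw [← hac] at hcd hs'e hcov2
      rcases lt_or_gt_of_ne hbd with hlt | hgt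
      · -- Config 2 : triple (a, b, d), given (a,b) then (a,d) : pathA'
        have had : a < d := lt_trans hab hlt
        obtain ⟨hgood, hbad⟩ := pathA' hab hlt hcov1 hcov2
        refine assemble hinv hab hlt (fun e => absurd e.1 (ne_of_lt hab)) hcov1 hgood
          (ne_of_lt had) (ne_of_lt hab) hs'e ?_ ?_
        · rw [hs'e, mul_assoc, mul_assoc,
            id_d (ne_of_lt hab) (ne_of_lt had) (ne_of_lt hlt)]
        · intro x y z w hxy hzw hcovxy heq
          have hVne : Equiv.swap a b * Equiv.swap a d ≠ 1 :=
            swap_mul_ne_one hab had (fun e => hbd e.2)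
          have hV : ∀ p, p ≠ a → p ≠ b → p ≠ d → (Equiv.swap a b * Equiv.swap a d) p = p := by
            intro p u1 u2 u3
            rw [Equiv.Perm.mul_apply, Equiv.swap_apply_of_ne_of_ne u1 u3,
              Equiv.swap_apply_of_ne_of_ne u1 u2]
          rcases classify3 hab hlt (ne_of_lt hxy) hV hVne heq with he | he | he
          · exact Or.inl he
          · exact Or.inr he
          · exfalso
            obtain ⟨e1, e2⟩ := swap_pair_eq hxy had he
            rw [e1, e2] at hcovxy
            exact hbad hcovxy
      · -- Config 3 : triple (a, d, b), given (a,b)=(αγ) then (a,d)=(αβ) : pathC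
        obtain ⟨hgood, hbad⟩ := pathC hcd hgt hcov1 hcov2
        refine assemble hinv hab hcd (fun e => absurd e.2 (ne_of_gt hgt)) hcov1 hgood
          (ne_of_lt hcd) (ne_of_lt hgt) hs'e ?_ ?_
        · rw [hs'e, mul_assoc, mul_assoc,
            ← id_b (ne_of_lt hcd) (ne_of_lt hab) (ne_of_lt hgt)]
        · intro x y z w hxy hzw hcovxy heq
          have hVne : Equiv.swap a b * Equiv.swap a d ≠ 1 :=
            swap_mul_ne_one hab hcd (fun e => hbd e.2)
          have hV : ∀ p, p ≠ a → p ≠ d → p ≠ b → (Equiv.swap a b * Equiv.swap a d) p = p := by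
            intro p u1 u2 u3
            rw [Equiv.Perm.mul_apply, Equiv.swap_apply_of_ne_of_ne u1 u2,
              Equiv.swap_apply_of_ne_of_ne u1 u3]
          rcases classify3 hcd hgt (ne_of_lt hxy) hV hVne heq with he | he | he
          · exact Or.inr he
          · exfalso
            obtain ⟨e1, e2⟩ := swap_pair_eq hxy hgt he
            rw [e1, e2] at hcovxy
            exact hbad hcovxy
          · exact Or.inl he
  · by_cases had : a = d
    · -- Config 4 : triple (c, a, b), given (a,b)=(βγ) then (c,a)=(αβ) : pathB'
      rw [← had] at hcd hs'e hcov2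
      have hcb : c < b := lt_trans hcd hab
      rcases pathB' hcd hab hcov1 hcov2 with ⟨hgood, hbad⟩ | ⟨hgood, hbad⟩
      · -- second middle (c,a), its partner (c,b)
        refine assemble hinv hab hcd (fun e => hac e.1) hcov1 hgood
          (ne_of_lt hcd) (ne_of_lt hcb) hs'e ?_ ?_
        · rw [hs'e, mul_assoc, mul_assoc,
            ← id_d (ne_of_lt hcd) (ne_of_lt hcb) (ne_of_lt hab)]
        · intro x y z w hxy hzw hcovxy heq
          have hVne : Equiv.swap a b * Equiv.swap c a ≠ 1 :=
            swap_mul_ne_one hab hcd (fun e => hac e.1)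
          have hV : ∀ p, p ≠ c → p ≠ a → p ≠ b → (Equiv.swap a b * Equiv.swap c a) p = p := by
            intro p u1 u2 u3
            rw [Equiv.Perm.mul_apply, Equiv.swap_apply_of_ne_of_ne u1 u2,
              Equiv.swap_apply_of_ne_of_ne u2 u3]
          rcases classify3 hcd hab (ne_of_lt hxy) hV hVne heq with he | he | he
          · exact Or.inr he
          · exact Or.inl he
          · exfalso
            obtain ⟨e1, e2⟩ := swap_pair_eq hxy hcb he
            rw [e1, e2] at hcovxy
            exact hbad hcovxy
      · -- second middle (c,b), its partner (a,b)
        refine assemble hinv hab hcb (fun e => hac e.1) hcov1 hgood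
          (ne_of_lt hcd) (ne_of_lt hab) hs'e ?_ ?_
        · rw [hs'e, mul_assoc, mul_assoc,
            ← id_d (ne_of_lt hcd) (ne_of_lt hcb) (ne_of_lt hab),
            id_c (ne_of_lt hcd) (ne_of_lt hcb) (ne_of_lt hab)]
        · intro x y z w hxy hzw hcovxy heq
          have hVne : Equiv.swap a b * Equiv.swap c a ≠ 1 :=
            swap_mul_ne_one hab hcd (fun e => hac e.1)
          have hV : ∀ p, p ≠ c → p ≠ a → p ≠ b → (Equiv.swap a b * Equiv.swap c a) p = p := by
            intro p u1 u2 u3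
            rw [Equiv.Perm.mul_apply, Equiv.swap_apply_of_ne_of_ne u1 u2,
              Equiv.swap_apply_of_ne_of_ne u2 u3]
          rcases classify3 hcd hab (ne_of_lt hxy) hV hVne heq with he | he | he
          · exfalso
            obtain ⟨e1, e2⟩ := swap_pair_eq hxy hcd he
            rw [e1, e2] at hcovxy
            exact hbad hcovxy
          · exact Or.inl he
          · exact Or.inr he
    · by_cases hbc : b = c
      · -- Config 1 : triple (a, b, d), given (a,b)=(αβ) then (b,d)=(βγ) : pathA
        rw [← hbc] at hcd hs'e hcov2
        have had2 : a < d := lt_trans hab hcd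
        rcases pathA hab hcd hcov1 hcov2 with ⟨hgood, hbad⟩ | ⟨hgood, hbad⟩
        · -- second middle (b,d), partner (a,d)
          refine assemble hinv hab hcd (fun e => absurd e.1 (ne_of_lt hab)) hcov1 hgood
            (ne_of_lt hcd) (ne_of_lt had2) hs'e ?_ ?_
          · rw [hs'e, mul_assoc, mul_assoc,
              id_a (ne_of_lt hab) (ne_of_lt had2) (ne_of_lt hcd)]
          · intro x y z w hxy hzw hcovxy heq
            have hVne : Equiv.swap a b * Equiv.swap b d ≠ 1 :=
              swap_mul_ne_one hab hcd (fun e => (ne_of_lt hab) e.1)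
            have hV : ∀ p, p ≠ a → p ≠ b → p ≠ d → (Equiv.swap a b * Equiv.swap b d) p = p := by
              intro p u1 u2 u3
              rw [Equiv.Perm.mul_apply, Equiv.swap_apply_of_ne_of_ne u2 u3,
                Equiv.swap_apply_of_ne_of_ne u1 u2]
            rcases classify3 hab hcd (ne_of_lt hxy) hV hVne heq with he | he | he
            · exact Or.inl he
            · exact Or.inr he
            · exfalso
              obtain ⟨e1, e2⟩ := swap_pair_eq hxy had2 he
              rw [e1, e2] at hcovxy
              exact hbad hcovxy
        · -- second middle (a,d), partner (a,b)
          refine assemble hinv hab had2 (fun e => absurd e.2 (ne_of_lt hcd)) hcov1 hgood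
            (ne_of_lt hcd) (ne_of_lt hab) hs'e ?_ ?_
          · rw [hs'e, mul_assoc, mul_assoc,
              id_b (ne_of_lt hab) (ne_of_lt had2) (ne_of_lt hcd)]
          · intro x y z w hxy hzw hcovxy heq
            have hVne : Equiv.swap a b * Equiv.swap b d ≠ 1 :=
              swap_mul_ne_one hab hcd (fun e => (ne_of_lt hab) e.1)
            have hV : ∀ p, p ≠ a → p ≠ b → p ≠ d → (Equiv.swap a b * Equiv.swap b d) p = p := by
              intro p u1 u2 u3
              rw [Equiv.Perm.mul_apply, Equiv.swap_apply_of_ne_of_ne u2 u3,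
                Equiv.swap_apply_of_ne_of_ne u1 u2]
            rcases classify3 hab hcd (ne_of_lt hxy) hV hVne heq with he | he | he
            · exact Or.inl he
            · exfalso
              obtain ⟨e1, e2⟩ := swap_pair_eq hxy hcd he
              rw [e1, e2] at hcovxy
              exact hbad hcovxy
            · exact Or.inr he
      · by_cases hbd : b = d
        · rw [← hbd] at hcd hs'e hcov2
          rcases lt_or_gt_of_ne hac with hlt | hgt
          · -- Config 5 : triple (a, c, b), given (a,b)=(αγ) then (c,b)=(βγ) : pathC'
            obtain ⟨hgood, hbad⟩ := pathC' hlt hcd hcov1 hcov2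
            refine assemble hinv hab hcd (fun e => absurd e.1 (ne_of_lt hlt)) hcov1 hgood
              (ne_of_lt hcd) (ne_of_lt hlt) hs'e ?_ ?_
            · have hid : Equiv.swap c b * Equiv.swap a c = Equiv.swap a b * Equiv.swap c b :=
                ((id_d (ne_of_lt hlt) (ne_of_lt hab) (ne_of_lt hcd)).symm).trans
                  (id_c (ne_of_lt hlt) (ne_of_lt hab) (ne_of_lt hcd))
              rw [hs'e, mul_assoc, mul_assoc, ← hid]
            · intro x y z w hxy hzw hcovxy heq
              have hVne : Equiv.swap a b * Equiv.swap c b ≠ 1 :=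
                swap_mul_ne_one hab hcd (fun e => hac e.1)
              have hV : ∀ p, p ≠ a → p ≠ c → p ≠ b → (Equiv.swap a b * Equiv.swap c b) p = p := by
                intro p u1 u2 u3
                rw [Equiv.Perm.mul_apply, Equiv.swap_apply_of_ne_of_ne u2 u3,
                  Equiv.swap_apply_of_ne_of_ne u1 u3]
              rcases classify3 hlt hcd (ne_of_lt hxy) hV hVne heq with he | he | he
              · exfalso
                obtain ⟨e1, e2⟩ := swap_pair_eq hxy hlt he
                rw [e1, e2] at hcovxy
                exact hbad hcovxy
              · exact Or.inr he
              · exact Or.inl he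
          · -- Config 6 : triple (c, a, b), given (a,b)=(βγ) then (c,b)=(αγ) : pathB
            obtain ⟨hgood, hbad⟩ := pathB hgt hab hcov1 hcov2
            refine assemble hinv hab hgt (fun e => absurd e.1 (ne_of_gt hgt)) hcov1 hgood
              (ne_of_lt hcd) (ne_of_lt hab) hs'e ?_ ?_
            · rw [hs'e, mul_assoc, mul_assoc,
                ← id_a (ne_of_lt hgt) (ne_of_lt hcd) (ne_of_lt hab)]
            · intro x y z w hxy hzw hcovxy heq
              have hVne : Equiv.swap a b * Equiv.swap c b ≠ 1 :=
                swap_mul_ne_one hab hcd (fun e => hac e.1)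
              have hV : ∀ p, p ≠ c → p ≠ a → p ≠ b → (Equiv.swap a b * Equiv.swap c b) p = p := by
                intro p u1 u2 u3
                rw [Equiv.Perm.mul_apply, Equiv.swap_apply_of_ne_of_ne u1 u3,
                  Equiv.swap_apply_of_ne_of_ne u2 u3]
              rcases classify3 hgt hab (ne_of_lt hxy) hV hVne heq with he | he | he
              · exact Or.inr he
              · exact Or.inl he
              · exfalso
                obtain ⟨e1, e2⟩ := swap_pair_eq hxy hcd he
                rw [e1, e2] at hcovxy
                exact hbad hcovxy
        · -- disjoint case
          have hgood : isCov s c d := path_disjoint hab hcd hac had hbc hbd hcov1 hcov2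
          have hcm : Equiv.swap a b * Equiv.swap c d = Equiv.swap c d * Equiv.swap a b :=
            swap_disjoint_comm hac had hbc hbd
          refine assemble hinv hab hcd (fun e => hac e.1) hcov1 hgood
            (ne_of_lt hcd) (ne_of_lt hab) hs'e ?_ ?_
          · rw [hs'e, mul_assoc, mul_assoc, hcm]
          · intro x y z w hxy hzw hcovxy heq
            have hVne : Equiv.swap a b * Equiv.swap c d ≠ 1 :=
              swap_mul_ne_one hab hcd (fun e => hac e.1)
            have hVV1 : (Equiv.swap a b * Equiv.swap c d) * (Equiv.swap a b * Equiv.swap c d)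
                = 1 := by
              calc (Equiv.swap a b * Equiv.swap c d) * (Equiv.swap a b * Equiv.swap c d)
                  = Equiv.swap a b * ((Equiv.swap c d * Equiv.swap a b) * Equiv.swap c d) := by
                    group
                _ = Equiv.swap a b * ((Equiv.swap a b * Equiv.swap c d) * Equiv.swap c d) := by
                    rw [← hcm]
                _ = (Equiv.swap a b * Equiv.swap a b) * (Equiv.swap c d * Equiv.swap c d) := by
                    group
                _ = 1 := by rw [Equiv.swap_mul_self, Equiv.swap_mul_self, one_mul]
            have hVV : ∀ p, (Equiv.swap a b * Equiv.swap c d)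
                ((Equiv.swap a b * Equiv.swap c d) p) = p := by
              intro p
              rw [← Equiv.Perm.mul_apply, hVV1, Equiv.Perm.one_apply]
            obtain ⟨hmx, hmy⟩ := factor_moves (ne_of_lt hxy) heq hVne
            have hpart : (Equiv.swap a b * Equiv.swap c d) x = y := by
              by_contra hp
              exact factor_partner (ne_of_lt hxy) heq hVV hmx hp
            have hVa : (Equiv.swap a b * Equiv.swap c d) a = b := by
              rw [Equiv.Perm.mul_apply, Equiv.swap_apply_of_ne_of_ne hac had,
                Equiv.swap_apply_left]
            have hVb : (Equiv.swap a b * Equiv.swap c d) b = a := by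
              rw [Equiv.Perm.mul_apply, Equiv.swap_apply_of_ne_of_ne hbc hbd,
                Equiv.swap_apply_right]
            have hVc : (Equiv.swap a b * Equiv.swap c d) c = d := by
              rw [Equiv.Perm.mul_apply, Equiv.swap_apply_left,
                Equiv.swap_apply_of_ne_of_ne (Ne.symm had) (Ne.symm hbd)]
            have hVd : (Equiv.swap a b * Equiv.swap c d) d = c := by
              rw [Equiv.Perm.mul_apply, Equiv.swap_apply_right,
                Equiv.swap_apply_of_ne_of_ne (Ne.symm hac) (Ne.symm hbc)]
            have hxmem : x = a ∨ x = b ∨ x = c ∨ x = d := by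
              by_contra hcon
              push_neg at hcon
              apply hmx
              rw [Equiv.Perm.mul_apply, Equiv.swap_apply_of_ne_of_ne hcon.2.2.1 hcon.2.2.2,
                Equiv.swap_apply_of_ne_of_ne hcon.1 hcon.2.1]
            rcases hxmem with rfl | rfl | rfl | rfl
            · rw [hVa] at hpart
              rw [← hpart]
              exact Or.inl rfl
            · rw [hVb] at hpart
              rw [← hpart]
              exact Or.inl (Equiv.swap_comm _ _)
            · rw [hVc] at hpart
              rw [← hpart]
              exact Or.inr rfl
            · rw [hVd] at hpart
              rw [← hpart]
              exact Or.inr (Equiv.swap_comm _ _)
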